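/- Fix a > 0. There exists an absolute constant c > 0 such that for infinitely many n ∈ ℕ there is a set F ⊆ {-1,1}^n with VC dimension d such that every pair of distinct x, y ∈ F satisfies |⟨x,y⟩| ≤ d^{-a}, and |F| ≥ exp(c·n^{1/(2a+1)}). -/

import Mathlib

open Finset

namespace VCAux

def sg (b : Bool) : ℤ := if b then 1 else -1

lemma sg_one_or (b : Bool) : sg b = 1 ∨ sg b = -1 := by cases b <;> simp [sg]

lemma sg_inj : Function.Injective sg := by
  intro b c h; cases b <;> cases c <;> simp_all [sg]

lemma sg_mul_self (b : Bool) : sg b * sg b = 1 := by cases b <;> simp [sg]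

lemma abs_sg (b : Bool) : |sg b| = 1 := by cases b <;> simp [sg]

def dotB (m : ℕ) (y z : Fin m → Bool) : ℤ := ∑ i, sg (y i) * sg (z i)

lemma dotB_comm (m : ℕ) (y z : Fin m → Bool) : dotB m y z = dotB m z y := by
  simp [dotB, mul_comm]

lemma dotB_self (m : ℕ) (y : Fin m → Bool) : dotB m y y = m := by
  simp [dotB, sg_mul_self]

lemma mgf (m : ℕ) (y : Fin m → Bool) (t : ℝ) :
    ∑ z : Fin m → Bool, Real.exp (t * (dotB m y z : ℝ))
      = (Real.exp t + Real.exp (-t)) ^ m := by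
  have h1 : ∀ z : Fin m → Bool, Real.exp (t * (dotB m y z : ℝ))
      = ∏ i, Real.exp (t * ((sg (y i) : ℝ) * (sg (z i) : ℝ))) := by
    intro z
    rw [← Real.exp_sum]
    congr 1
    rw [dotB]
    push_cast
    rw [Finset.mul_sum]
  simp only [h1]
  rw [← Fintype.prod_sum (fun i (b : Bool) => Real.exp (t * ((sg (y i) : ℝ) * (sg b : ℝ))))]
  have h2 : ∀ i, ∑ b : Bool, Real.exp (t * ((sg (y i) : ℝ) * (sg b : ℝ)))
      = Real.exp t + Real.exp (-t) := by
    intro i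
    cases hyi : y i <;> simp [sg, Fintype.sum_bool] <;> ring_nf <;> rw [add_comm]
  simp only [h2]
  simp [Finset.prod_const]

lemma tail_ge (m : ℕ) (hm : 0 < m) (y : Fin m → Bool) (s : ℝ) (hs : 0 ≤ s) :
    (({z : Fin m → Bool | s ≤ (dotB m y z : ℝ)} : Finset _).card : ℝ)
      ≤ 2 ^ m * Real.exp (-(s ^ 2) / (2 * m)) := by
  classical
  set t : ℝ := s / m with ht
  have hmR : (0:ℝ) < m := by exact_mod_cast hm
  have ht0 : 0 ≤ t := div_nonneg hs hmR.le
  have key : (({z : Fin m → Bool | s ≤ (dotB m y z : ℝ)} : Finset _).card : ℝ) * Real.exp (t * s)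
      ≤ (Real.exp t + Real.exp (-t)) ^ m := by
    rw [← mgf m y t]
    calc (({z : Fin m → Bool | s ≤ (dotB m y z : ℝ)} : Finset _).card : ℝ) * Real.exp (t * s)
        = ∑ _z ∈ ({z : Fin m → Bool | s ≤ (dotB m y z : ℝ)} : Finset _), Real.exp (t * s) := by
          rw [Finset.sum_const, nsmul_eq_mul]
      _ ≤ ∑ z ∈ ({z : Fin m → Bool | s ≤ (dotB m y z : ℝ)} : Finset _),
            Real.exp (t * (dotB m y z : ℝ)) := by
          apply Finset.sum_le_sum
          intro z hz
          simp only [Finset.mem_filter, Finset.mem_univ, true_and, Set.mem_setOf_eq,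
            Finset.mem_coe] at hz
          have : s ≤ (dotB m y z : ℝ) := by simpa using hz
          exact Real.exp_le_exp.2 (mul_le_mul_of_nonneg_left this ht0)
      _ ≤ ∑ z : Fin m → Bool, Real.exp (t * (dotB m y z : ℝ)) := by
          apply Finset.sum_le_sum_of_subset_of_nonneg (Finset.subset_univ _)
          intro z _ _; positivity
  have hcosh : (Real.exp t + Real.exp (-t)) ^ m ≤ 2 ^ m * Real.exp (m * t ^ 2 / 2) := by
    have h1 : Real.exp t + Real.exp (-t) = 2 * Real.cosh t := by
      rw [Real.cosh_eq]; ring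
    have h2 : Real.cosh t ≤ Real.exp (t ^ 2 / 2) := Real.cosh_le_exp_half_sq t
    calc (Real.exp t + Real.exp (-t)) ^ m = (2 * Real.cosh t) ^ m := by rw [h1]
      _ ≤ (2 * Real.exp (t ^ 2 / 2)) ^ m := by
          apply pow_le_pow_left₀ (by positivity)
          have := Real.cosh_pos (x := t)
          linarith
      _ = 2 ^ m * Real.exp (t ^ 2 / 2) ^ m := by rw [mul_pow]
      _ = 2 ^ m * Real.exp (m * t ^ 2 / 2) := by
          rw [← Real.exp_nat_mul]; ring_nf
  have hfinal : (({z : Fin m → Bool | s ≤ (dotB m y z : ℝ)} : Finset _).card : ℝ)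
      ≤ 2 ^ m * Real.exp (m * t ^ 2 / 2) * Real.exp (-(t * s)) := by
    have hpos : (0:ℝ) < Real.exp (t * s) := Real.exp_pos _
    rw [← le_div_iff₀ hpos] at key
    calc (({z : Fin m → Bool | s ≤ (dotB m y z : ℝ)} : Finset _).card : ℝ)
        ≤ (Real.exp t + Real.exp (-t)) ^ m / Real.exp (t * s) := key
      _ ≤ 2 ^ m * Real.exp (m * t ^ 2 / 2) / Real.exp (t * s) := by
          gcongr
      _ = 2 ^ m * Real.exp (m * t ^ 2 / 2) * Real.exp (-(t * s)) := by
          rw [Real.exp_neg]; ring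
  calc (({z : Fin m → Bool | s ≤ (dotB m y z : ℝ)} : Finset _).card : ℝ)
      ≤ 2 ^ m * Real.exp (m * t ^ 2 / 2) * Real.exp (-(t * s)) := hfinal
    _ = 2 ^ m * Real.exp (-(s ^ 2) / (2 * m)) := by
        rw [mul_assoc, ← Real.exp_add]
        congr 2
        field_simp [ht]
        have hmt : (m:ℝ) * t = s := by rw [ht]; field_simp
        linear_combination (↑m * t - s) * hmt

lemma dotB_neg (m : ℕ) (y z : Fin m → Bool) : dotB m y (fun i => !(z i)) = -dotB m y z := by
  rw [dotB, dotB, ← Finset.sum_neg_distrib]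
  apply Finset.sum_congr rfl
  intro i _
  cases z i <;> simp [sg]

lemma tail_abs (m : ℕ) (hm : 0 < m) (y : Fin m → Bool) (s : ℝ) (hs : 0 ≤ s) :
    (({z : Fin m → Bool | s ≤ |(dotB m y z : ℝ)|} : Finset _).card : ℝ)
      ≤ 2 * 2 ^ m * Real.exp (-(s ^ 2) / (2 * m)) := by
  classical
  have hsub : ({z : Fin m → Bool | s ≤ |(dotB m y z : ℝ)|} : Finset _) ⊆
      ({z : Fin m → Bool | s ≤ (dotB m y z : ℝ)} : Finset _) ∪
      ({z : Fin m → Bool | (dotB m y z : ℝ) ≤ -s} : Finset _) := by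
    intro z hz
    simp only [Finset.mem_filter, Finset.mem_univ, true_and, Finset.mem_union,
      Set.mem_setOf_eq] at *
    rcases le_abs.mp hz with h | h
    · exact Or.inl h
    · exact Or.inr (by linarith)
  have hcard2 : ({z : Fin m → Bool | (dotB m y z : ℝ) ≤ -s} : Finset _).card
      = ({z : Fin m → Bool | s ≤ (dotB m y z : ℝ)} : Finset _).card := by
    refine Finset.card_nbij' (fun z => fun i => !(z i)) (fun z => fun i => !(z i)) ?_ ?_ ?_ ?_
    · intro z hz
      simp only [Finset.mem_filter, Finset.mem_univ, true_and, Set.mem_setOf_eq,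
        Finset.mem_coe, Finset.coe_filter] at hz ⊢
      rw [dotB_neg]
      push_cast at hz ⊢
      linarith
    · intro z hz
      simp only [Finset.mem_filter, Finset.mem_univ, true_and, Set.mem_setOf_eq,
        Finset.mem_coe, Finset.coe_filter] at hz ⊢
      rw [dotB_neg]
      push_cast at hz ⊢
      linarith
    · intro z _; funext i; simp
    · intro z _; funext i; simp
  calc (({z : Fin m → Bool | s ≤ |(dotB m y z : ℝ)|} : Finset _).card : ℝ)
      ≤ ((({z : Fin m → Bool | s ≤ (dotB m y z : ℝ)} : Finset _) ∪
          ({z : Fin m → Bool | (dotB m y z : ℝ) ≤ -s} : Finset _)).card : ℝ) := by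
        exact_mod_cast Nat.cast_le.mpr (Finset.card_le_card hsub)
    _ ≤ (({z : Fin m → Bool | s ≤ (dotB m y z : ℝ)} : Finset _).card : ℝ)
        + (({z : Fin m → Bool | (dotB m y z : ℝ) ≤ -s} : Finset _).card : ℝ) := by
        exact_mod_cast Nat.cast_le.mpr (Finset.card_union_le _ _)
    _ = 2 * (({z : Fin m → Bool | s ≤ (dotB m y z : ℝ)} : Finset _).card : ℝ) := by
        rw [hcard2]; ring
    _ ≤ 2 * (2 ^ m * Real.exp (-(s ^ 2) / (2 * m))) := by
        have := tail_ge m hm y s hs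
        linarith
    _ = 2 * 2 ^ m * Real.exp (-(s ^ 2) / (2 * m)) := by ring

lemma greedy (m : ℕ) (hm : 0 < m) (s : ℝ) (hs0 : 0 ≤ s) (hsm : s < m) :
    ∀ k : ℕ, ((k : ℝ) * (2 * 2 ^ m * Real.exp (-(s ^ 2) / (2 * m))) < 2 ^ m) →
    ∃ C : Finset (Fin m → Bool), C.card = k ∧
      ∀ y ∈ C, ∀ z ∈ C, y ≠ z → |(dotB m y z : ℝ)| ≤ s := by
  classical
  intro k
  induction k with
  | zero => intro _; exact ⟨∅, by simp⟩
  | succ k ih =>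
    intro hk
    have hB0 : (0:ℝ) ≤ 2 * 2 ^ m * Real.exp (-(s ^ 2) / (2 * m)) := by positivity
    obtain ⟨C, hCcard, hCpair⟩ := ih (by
      have : (k : ℝ) ≤ (k + 1 : ℕ) := by push_cast; linarith
      nlinarith)
    set Bad : Finset (Fin m → Bool) :=
      C.biUnion (fun y => ({z : Fin m → Bool | s ≤ |(dotB m y z : ℝ)|} : Finset _)) with hBad
    have hBadcard : (Bad.card : ℝ) < 2 ^ m := by
      calc (Bad.card : ℝ)
          ≤ ((∑ y ∈ C, ({z : Fin m → Bool | s ≤ |(dotB m y z : ℝ)|} : Finset _).card : ℕ) : ℝ) :=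
            Nat.cast_le.mpr Finset.card_biUnion_le
        _ = ∑ y ∈ C, (({z : Fin m → Bool | s ≤ |(dotB m y z : ℝ)|} : Finset _).card : ℝ) := by
            push_cast; rfl
        _ ≤ ∑ _y ∈ C, (2 * 2 ^ m * Real.exp (-(s ^ 2) / (2 * m))) :=
            Finset.sum_le_sum (fun y _ => tail_abs m hm y s hs0)
        _ = (k : ℝ) * (2 * 2 ^ m * Real.exp (-(s ^ 2) / (2 * m))) := by
            rw [Finset.sum_const, hCcard, nsmul_eq_mul]
        _ < 2 ^ m := by
            have : (k : ℝ) ≤ (k + 1 : ℕ) := by push_cast; linarith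
            nlinarith
    have hex : ∃ z : Fin m → Bool, z ∉ Bad := by
      by_contra h
      push_neg at h
      have : (Finset.univ : Finset (Fin m → Bool)) ⊆ Bad := fun z _ => h z
      have hcard := Finset.card_le_card this
      rw [Finset.card_univ] at hcard
      have : (2 ^ m : ℝ) ≤ (Bad.card : ℝ) := by
        have h2 : Fintype.card (Fin m → Bool) = 2 ^ m := by simp
        rw [h2] at hcard
        exact_mod_cast hcard
      linarith
    obtain ⟨z, hz⟩ := hex
    have hzgood : ∀ y ∈ C, |(dotB m y z : ℝ)| < s := by
      intro y hy
      by_contra h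
      push_neg at h
      exact hz (Finset.mem_biUnion.mpr ⟨y, hy, by
        simp only [Finset.mem_filter, Finset.mem_univ, true_and, Set.mem_setOf_eq]
        exact h⟩)
    have hzC : z ∉ C := by
      intro hzc
      have := hzgood z hzc
      rw [dotB_self] at this
      have : |(m : ℝ)| < s := by exact_mod_cast this
      rw [abs_of_nonneg (by positivity)] at this
      linarith
    refine ⟨insert z C, ?_, ?_⟩
    · rw [Finset.card_insert_of_notMem hzC, hCcard]
    · intro y hy w hw hyw
      rcases Finset.mem_insert.mp hy with rfl | hy' <;>
        rcases Finset.mem_insert.mp hw with rfl | hw'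
      · exact absurd rfl hyw
      · rw [dotB_comm]; exact (hzgood w hw').le
      · exact (hzgood y hy').le
      · exact hCpair y hy' w hw' hyw

lemma code_exists (m : ℕ) (hm : 0 < m) (s : ℝ) (hs0 : 0 ≤ s) (hsm : s < m) (d : ℕ)
    (hcond : ((2 ^ d : ℕ) : ℝ) * (2 * 2 ^ m * Real.exp (-(s ^ 2) / (2 * m))) < 2 ^ m) :
    ∃ f : (Fin d → Bool) → (Fin m → Bool), Function.Injective f ∧
      ∀ u v, u ≠ v → |(dotB m (f u) (f v) : ℝ)| ≤ s := by
  classical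
  obtain ⟨C, hCcard, hCpair⟩ := greedy m hm s hs0 hsm (2 ^ d) hcond
  have hcards : Fintype.card (Fin d → Bool) = Fintype.card C := by
    simp [Fintype.card_coe, hCcard]
  let e := Fintype.equivOfCardEq hcards
  refine ⟨fun u => (e u : Fin m → Bool), ?_, ?_⟩
  · intro u v h
    apply e.injective
    exact Subtype.ext h
  · intro u v huv
    apply hCpair _ (e u).2 _ (e v).2
    intro h
    exact huv (e.injective (Subtype.ext h))

def xfun (n d : ℕ) (f : (Fin d → Bool) → (Fin (n - d) → Bool)) (u : Fin d → Bool) :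
    Fin n → ℤ := fun i =>
  if h : (i : ℕ) < d then sg (u ⟨i, h⟩)
  else sg (f u ⟨(i : ℕ) - d, by have := i.isLt; omega⟩)

lemma xfun_lt (n d : ℕ) (f : (Fin d → Bool) → (Fin (n - d) → Bool)) (u : Fin d → Bool)
    (i : Fin n) (h : (i : ℕ) < d) : xfun n d f u i = sg (u ⟨i, h⟩) := dif_pos h

lemma xfun_ge (n d : ℕ) (f : (Fin d → Bool) → (Fin (n - d) → Bool)) (u : Fin d → Bool)
    (i : Fin n) (h : ¬ (i : ℕ) < d) :
    xfun n d f u i = sg (f u ⟨(i : ℕ) - d, by have := i.isLt; omega⟩) := dif_neg h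

lemma xfun_inj (n d : ℕ) (hdn : d ≤ n) (f : (Fin d → Bool) → (Fin (n - d) → Bool)) :
    Function.Injective (xfun n d f) := by
  intro u v h
  funext j
  apply sg_inj
  have h2 := congrFun h ⟨(j : ℕ), lt_of_lt_of_le j.isLt hdn⟩
  rw [xfun_lt n d f u ⟨(j : ℕ), lt_of_lt_of_le j.isLt hdn⟩ j.isLt,
    xfun_lt n d f v ⟨(j : ℕ), lt_of_lt_of_le j.isLt hdn⟩ j.isLt] at h2
  simpa using h2

def emb1 (n d : ℕ) (hdn : d ≤ n) : Fin d ↪ Fin n :=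
  ⟨fun j => ⟨(j : ℕ), lt_of_lt_of_le j.isLt hdn⟩, by
    intro j1 j2 h
    have := congrArg Fin.val h
    simp only at this
    exact Fin.ext this⟩

def emb2 (n d : ℕ) : Fin (n - d) ↪ Fin n :=
  ⟨fun j => ⟨d + (j : ℕ), by have := j.isLt; omega⟩, by
    intro j1 j2 h
    have := congrArg Fin.val h
    simp only at this
    exact Fin.ext (by omega)⟩

lemma filt1 (n d : ℕ) (hdn : d ≤ n) :
    Finset.univ.filter (fun i : Fin n => (i : ℕ) < d) = Finset.univ.map (emb1 n d hdn) := by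
  ext i
  simp only [Finset.mem_filter, Finset.mem_univ, true_and, Finset.mem_map]
  constructor
  · intro h; exact ⟨⟨i, h⟩, Fin.ext rfl⟩
  · rintro ⟨j, rfl⟩; exact j.isLt

lemma filt2 (n d : ℕ) :
    Finset.univ.filter (fun i : Fin n => ¬ (i : ℕ) < d) = Finset.univ.map (emb2 n d) := by
  ext i
  simp only [Finset.mem_filter, Finset.mem_univ, true_and, Finset.mem_map, not_lt]
  constructor
  · intro h
    refine ⟨⟨(i : ℕ) - d, by have := i.isLt; omega⟩, Fin.ext ?_⟩
    show d + ((i : ℕ) - d) = (i : ℕ)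
    omega
  · rintro ⟨j, rfl⟩
    show d ≤ d + (j : ℕ)
    omega

lemma xfun_sum (n d : ℕ) (hdn : d ≤ n) (f : (Fin d → Bool) → (Fin (n - d) → Bool))
    (u v : Fin d → Bool) :
    ∑ i : Fin n, xfun n d f u i * xfun n d f v i
      = (∑ j : Fin d, sg (u j) * sg (v j)) + dotB (n - d) (f u) (f v) := by
  rw [← Finset.sum_filter_add_sum_filter_not Finset.univ (fun i : Fin n => (i : ℕ) < d)]
  congr 1
  · rw [filt1 n d hdn, Finset.sum_map]
    apply Finset.sum_congr rfl
    intro j _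
    have h : ((emb1 n d hdn j : Fin n) : ℕ) < d := j.isLt
    rw [xfun_lt _ _ _ _ _ h, xfun_lt _ _ _ _ _ h]
    have : (⟨((emb1 n d hdn j : Fin n) : ℕ), h⟩ : Fin d) = j := Fin.ext rfl
    rw [this]
  · rw [filt2 n d, Finset.sum_map, dotB]
    apply Finset.sum_congr rfl
    intro j _
    have h : ¬ ((emb2 n d j : Fin n) : ℕ) < d := by
      show ¬ d + (j : ℕ) < d; omega
    rw [xfun_ge _ _ _ _ _ h, xfun_ge _ _ _ _ _ h]
    have : (⟨((emb2 n d j : Fin n) : ℕ) - d, by have := (emb2 n d j).isLt; omega⟩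
        : Fin (n - d)) = j := Fin.ext (by show d + (j : ℕ) - d = (j : ℕ); omega)
    rw [this]

end VCAux

open VCAux

/-- Normalized inner product on `{-1,1}^n`. -/
noncomputable def ipNorm (n : ℕ) (x y : Fin n → ℤ) : ℝ := ((∑ i, x i * y i : ℤ) : ℝ) / n

/-- `F` shatters the index set `I`: every `±1` pattern on `I` is realized by some `x ∈ F`. -/
def Shatters (n : ℕ) (F : Finset (Fin n → ℤ)) (I : Finset (Fin n)) : Prop :=
  ∀ g : Fin n → ℤ, (∀ i ∈ I, g i = 1 ∨ g i = -1) → ∃ x ∈ F, ∀ i ∈ I, x i = g i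

set_option maxHeartbeats 1000000 in
lemma package (a : ℝ) (n d : ℕ) (hdn : d < n) (s : ℝ)
    (f : (Fin d → Bool) → (Fin (n - d) → Bool))
    (hfcode : ∀ u v, u ≠ v → |(dotB (n - d) (f u) (f v) : ℝ)| ≤ s)
    (hbound : (d : ℝ) + s ≤ (n : ℝ) * (d : ℝ) ^ (-a)) :
    ∃ F : Finset (Fin n → ℤ),
      (∀ x ∈ F, ∀ i, x i = 1 ∨ x i = -1) ∧
      IsGreatest {k : ℕ | ∃ I : Finset (Fin n), I.card = k ∧ Shatters n F I} d ∧
      (∀ x ∈ F, ∀ y ∈ F, x ≠ y → |ipNorm n x y| ≤ (d : ℝ) ^ (-a)) ∧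
      F.card = 2 ^ d := by
  classical
  refine ⟨Finset.image (xfun n d f) Finset.univ, ?_, ?_, ?_, ?_⟩
  · intro z hz i
    obtain ⟨u, -, rfl⟩ := Finset.mem_image.mp hz
    rw [xfun]
    split <;> exact sg_one_or _
  · constructor
    · refine ⟨Finset.univ.map (emb1 n d hdn.le), by simp, ?_⟩
      intro g hg
      set u : Fin d → Bool := fun j => if g (emb1 n d hdn.le j) = 1 then true else false
        with hudef
      refine ⟨xfun n d f u, Finset.mem_image.mpr ⟨u, Finset.mem_univ _, rfl⟩, ?_⟩
      intro i hi
      obtain ⟨j, -, rfl⟩ := Finset.mem_map.mp hi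
      have hlt : ((emb1 n d hdn.le j : Fin n) : ℕ) < d := j.isLt
      rw [xfun_lt n d f u _ hlt]
      have hj : (⟨((emb1 n d hdn.le j : Fin n) : ℕ), hlt⟩ : Fin d) = j := Fin.ext rfl
      rw [hj]
      rcases hg _ (Finset.mem_map.mpr ⟨j, Finset.mem_univ _, rfl⟩) with h1 | h1
      · rw [hudef]; simp [h1, sg]
      · rw [hudef]
        have : ¬ g (emb1 n d hdn.le j) = 1 := by rw [h1]; norm_num
        simp [this, h1, sg]
    · rintro k ⟨I, hIcard, hIshat⟩
      have h2k : 2 ^ k ≤ (Finset.image (xfun n d f) Finset.univ).card := by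
        have hch : ∀ p : (↥I → Bool), ∃ z ∈ Finset.image (xfun n d f) Finset.univ,
            ∀ i (hi : i ∈ I), z i = sg (p ⟨i, hi⟩) := by
          intro p
          obtain ⟨z, hzF, hzval⟩ := hIshat
            (fun i => if h : i ∈ I then sg (p ⟨i, h⟩) else 1)
            (by intro i hi; beta_reduce; rw [dif_pos hi]; exact sg_one_or _)
          refine ⟨z, hzF, ?_⟩
          intro i hi
          have := hzval i hi
          rwa [dif_pos hi] at this
        choose Φ hΦF hΦval using hch
        have hinj : Function.Injective Φ := by
          intro p q hpq
          funext j
          apply sg_inj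
          rw [← hΦval p j j.2, ← hΦval q j j.2, hpq]
        calc 2 ^ k = Fintype.card (↥I → Bool) := by
              simp [Fintype.card_coe, hIcard]
          _ = (Finset.univ.image Φ).card := by
              rw [Finset.card_image_of_injective _ hinj, Finset.card_univ]
          _ ≤ (Finset.image (xfun n d f) Finset.univ).card := Finset.card_le_card (by
              intro z hz
              obtain ⟨p, -, rfl⟩ := Finset.mem_image.mp hz
              exact hΦF p)
      have hFcard : (Finset.image (xfun n d f) Finset.univ).card = 2 ^ d := by
        rw [Finset.card_image_of_injective _ (xfun_inj n d hdn.le f), Finset.card_univ]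
        simp
      rw [hFcard] at h2k
      exact (Nat.pow_le_pow_iff_right (by norm_num)).mp h2k
  · intro z hz w hw hzw
    obtain ⟨u, -, rfl⟩ := Finset.mem_image.mp hz
    obtain ⟨v, -, rfl⟩ := Finset.mem_image.mp hw
    have huv : u ≠ v := fun h => hzw (by rw [h])
    have hsum := xfun_sum n d hdn.le f u v
    have hn0 : (0:ℝ) < (n:ℝ) := by
      have : 0 < n := by omega
      exact_mod_cast this
    have hS1 : |(∑ j : Fin d, sg (u j) * sg (v j) : ℤ)| ≤ (d : ℤ) := by
      calc |(∑ j : Fin d, sg (u j) * sg (v j) : ℤ)|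
          ≤ ∑ j : Fin d, |sg (u j) * sg (v j)| := Finset.abs_sum_le_sum_abs _ _
        _ = ∑ _j : Fin d, 1 := by
            apply Finset.sum_congr rfl
            intro j _
            rw [abs_mul, abs_sg, abs_sg, mul_one]
        _ = (d : ℤ) := by simp
    have hS2 : |(dotB (n - d) (f u) (f v) : ℝ)| ≤ s := hfcode u v huv
    have hS1' : |((∑ j : Fin d, sg (u j) * sg (v j) : ℤ) : ℝ)| ≤ (d : ℝ) := by
      rw [← Int.cast_abs]
      exact_mod_cast hS1
    have htot : |((∑ i : Fin n, xfun n d f u i * xfun n d f v i : ℤ) : ℝ)|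
        ≤ (n : ℝ) * (d : ℝ) ^ (-a) := by
      rw [hsum]
      push_cast
      push_cast at hS1'
      calc |(∑ j : Fin d, ((sg (u j) : ℝ)) * (sg (v j) : ℝ))
          + (dotB (n - d) (f u) (f v) : ℝ)|
          ≤ |(∑ j : Fin d, ((sg (u j) : ℝ)) * (sg (v j) : ℝ))|
            + |(dotB (n - d) (f u) (f v) : ℝ)| := abs_add_le _ _
        _ ≤ (d : ℝ) + s := add_le_add hS1' hS2
        _ ≤ (n : ℝ) * (d : ℝ) ^ (-a) := hbound
    rw [ipNorm, abs_div, abs_of_nonneg hn0.le, div_le_iff₀ hn0]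
    calc |((∑ i : Fin n, xfun n d f u i * xfun n d f v i : ℤ) : ℝ)|
        ≤ (n : ℝ) * (d : ℝ) ^ (-a) := htot
      _ = (d:ℝ) ^ (-a) * (n:ℝ) := by ring
  · rw [Finset.card_image_of_injective _ (xfun_inj n d hdn.le f), Finset.card_univ]
    simp

set_option maxHeartbeats 1000000 in
/-- Fix `a > 0`. There is an absolute constant `c > 0` such that for infinitely many `n`
there is `F ⊆ {-1,1}^n` with VC dimension `d`, all distinct pairs `|⟨x,y⟩| ≤ d^(-a)`,
and `|F| ≥ exp(c·n^(1/(2a+1)))`. -/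
theorem stmt2 (a : ℝ) (ha : 0 < a) :
    ∃ c : ℝ, 0 < c ∧ ∀ N : ℕ, ∃ n : ℕ, N ≤ n ∧
      ∃ (F : Finset (Fin n → ℤ)) (d : ℕ),
        (∀ x ∈ F, ∀ i, x i = 1 ∨ x i = -1) ∧
        IsGreatest {k : ℕ | ∃ I : Finset (Fin n), I.card = k ∧ Shatters n F I} d ∧
        (∀ x ∈ F, ∀ y ∈ F, x ≠ y → |ipNorm n x y| ≤ (d : ℝ) ^ (-a)) ∧
        Real.exp (c * (n : ℝ) ^ (1 / (2 * a + 1))) ≤ (F.card : ℝ) := by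
  classical
  have hlog2 : (0:ℝ) < Real.log 2 := Real.log_pos (by norm_num)
  have hlog2' : Real.log 2 ≤ 1 := by
    have := Real.log_le_sub_one_of_pos (by norm_num : (0:ℝ) < 2)
    linarith
  refine ⟨Real.log 2 / 16, by positivity, ?_⟩
  intro N
  obtain ⟨θ, hθdef⟩ : ∃ θ : ℝ, θ = 1 / (2 * a + 1) := ⟨_, rfl⟩
  have h2a1 : (0:ℝ) < 2 * a + 1 := by linarith
  have hθpos : 0 < θ := by rw [hθdef]; positivity
  have hθ1 : θ ≤ 1 := by rw [hθdef, div_le_one h2a1]; linarith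
  obtain ⟨n, hnN, hnceil⟩ : ∃ n : ℕ, N ≤ n ∧ (16:ℝ) ^ (2 * a + 1) ≤ (n : ℝ) := by
    refine ⟨max N ⌈(16:ℝ) ^ (2 * a + 1)⌉₊, le_max_left _ _, ?_⟩
    calc (16:ℝ) ^ (2 * a + 1) ≤ (⌈(16:ℝ) ^ (2 * a + 1)⌉₊ : ℝ) := Nat.le_ceil _
      _ ≤ _ := by exact_mod_cast le_max_right N _
  refine ⟨n, hnN, ?_⟩
  obtain ⟨x, hxdef⟩ : ∃ x : ℝ, x = (n : ℝ) := ⟨_, rfl⟩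
  have hx16 : (16:ℝ) ≤ x := by
    rw [hxdef]
    calc (16:ℝ) = 16 ^ (1:ℝ) := (Real.rpow_one _).symm
      _ ≤ 16 ^ (2 * a + 1) := Real.rpow_le_rpow_of_exponent_le (by norm_num) (by linarith)
      _ ≤ (n:ℝ) := hnceil
  have hx0 : (0:ℝ) < x := by linarith
  have hx1 : (1:ℝ) ≤ x := by linarith
  have hxθ16 : (16:ℝ) ≤ x ^ θ := by
    have h1 : ((16:ℝ) ^ (2 * a + 1)) ^ θ ≤ x ^ θ :=
      Real.rpow_le_rpow (by positivity) (hxdef ▸ hnceil) hθpos.le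
    have h2 : ((16:ℝ) ^ (2 * a + 1)) ^ θ = 16 := by
      rw [← Real.rpow_mul (by norm_num), hθdef, mul_one_div, div_self (ne_of_gt h2a1),
        Real.rpow_one]
    linarith
  have hxθpos : (0:ℝ) < x ^ θ := by positivity
  obtain ⟨d, hddef⟩ : ∃ d : ℕ, d = ⌊x ^ θ / 8⌋₊ := ⟨_, rfl⟩
  obtain ⟨D, hDdef⟩ : ∃ D : ℝ, D = (d : ℝ) := ⟨_, rfl⟩
  have hdhi : D ≤ x ^ θ / 8 := by rw [hDdef, hddef]; exact Nat.floor_le (by positivity)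
  have hdlo : x ^ θ / 16 ≤ D := by
    have h1 : x ^ θ / 8 - 1 < D := by
      rw [hDdef, hddef]; exact Nat.sub_one_lt_floor _
    linarith
  have hd2 : 2 ≤ d := by
    rw [hddef]
    apply Nat.le_floor
    push_cast
    linarith
  have hD2 : (2:ℝ) ≤ D := by rw [hDdef]; exact_mod_cast hd2
  have hD0 : (0:ℝ) < D := by linarith
  have hD1 : (1:ℝ) < D := by linarith
  have hθx : x ^ θ ≤ x := by
    calc x ^ θ ≤ x ^ (1:ℝ) := Real.rpow_le_rpow_of_exponent_le hx1 hθ1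
      _ = x := Real.rpow_one x
  have hdn : d < n := by
    have hDx : D < x := by linarith
    rw [hDdef, hxdef] at hDx
    exact_mod_cast hDx
  have hm : 0 < n - d := by omega
  have hmcast : ((n - d : ℕ) : ℝ) = x - D := by
    rw [hDdef, hxdef, Nat.cast_sub hdn.le]
  obtain ⟨ε, hεdef⟩ : ∃ ε : ℝ, ε = D ^ (-a) := ⟨_, rfl⟩
  have hε0 : 0 < ε := by rw [hεdef]; exact Real.rpow_pos_of_pos hD0 _
  have hε1 : ε < 1 := by
    rw [hεdef]; exact Real.rpow_lt_one_of_one_lt_of_neg hD1 (by linarith)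
  have hDaε : D ^ a * ε = 1 := by
    rw [hεdef, ← Real.rpow_add hD0]; simp
  have hkey : 8 * (D * D ^ a) ≤ x := by
    have h1 : 8 * D ≤ x ^ θ := by linarith
    have h2 : (8 * D) ^ ((1:ℝ) + a) ≤ (x ^ θ) ^ ((1:ℝ) + a) :=
      Real.rpow_le_rpow (by positivity) h1 (by linarith)
    have h3 : (x ^ θ) ^ ((1:ℝ) + a) = x ^ (θ * (1 + a)) := by
      rw [← Real.rpow_mul hx0.le]
    have h4 : x ^ (θ * (1 + a)) ≤ x := by
      have hle1 : θ * (1 + a) ≤ 1 := by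
        rw [hθdef, div_mul_eq_mul_div, one_mul, div_le_one h2a1]; linarith
      calc x ^ (θ * (1 + a)) ≤ x ^ (1:ℝ) := Real.rpow_le_rpow_of_exponent_le hx1 hle1
        _ = x := Real.rpow_one x
    have h5 : (8 * D) ^ ((1:ℝ) + a) = 8 ^ ((1:ℝ) + a) * D ^ ((1:ℝ) + a) :=
      Real.mul_rpow (by norm_num) hD0.le
    have h6 : (8:ℝ) ≤ 8 ^ ((1:ℝ) + a) := by
      calc (8:ℝ) = 8 ^ (1:ℝ) := (Real.rpow_one 8).symm
        _ ≤ 8 ^ ((1:ℝ) + a) :=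
          Real.rpow_le_rpow_of_exponent_le (by norm_num) (by linarith)
    have h7 : D ^ ((1:ℝ) + a) = D * D ^ a := by
      rw [Real.rpow_add hD0, Real.rpow_one]
    have h8 : (0:ℝ) ≤ D ^ ((1:ℝ) + a) := by positivity
    nlinarith [mul_le_mul_of_nonneg_right h6 h8]
  have hsD : 8 * D ≤ x * ε := by
    have h := mul_le_mul_of_nonneg_right hkey hε0.le
    have h2 : 8 * (D * D ^ a) * ε = 8 * D * (D ^ a * ε) := by ring
    rw [h2, hDaε, mul_one] at h
    exact h
  obtain ⟨s, hsdef⟩ : ∃ s : ℝ, s = x * ε - D := ⟨_, rfl⟩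
  have hs0 : (0:ℝ) ≤ s := by rw [hsdef]; linarith
  have hs78 : 7 * (x * ε) / 8 ≤ s := by rw [hsdef]; linarith
  have hsm : s < ((n - d : ℕ) : ℝ) := by
    rw [hmcast, hsdef]
    have : x * ε < x * 1 := mul_lt_mul_of_pos_left hε1 hx0
    linarith
  have hDθ : D ≤ x ^ θ := by linarith
  have hD2a : D ^ (2 * a) ≤ (x ^ θ) ^ (2 * a) :=
    Real.rpow_le_rpow hD0.le hDθ (by linarith)
  have hεsq : ε ^ 2 = D ^ (-(2 * a)) := by
    rw [hεdef, sq, ← Real.rpow_add hD0]; ring_nf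
  have hε2 : ((x ^ θ) ^ (2 * a))⁻¹ ≤ ε ^ 2 := by
    rw [hεsq, Real.rpow_neg hD0.le]
    exact inv_anti₀ (Real.rpow_pos_of_pos hD0 _) hD2a
  have hxsplit : x ^ θ * x ^ (θ * (2 * a)) = x := by
    rw [← Real.rpow_add hx0]
    have h : θ + θ * (2 * a) = 1 := by
      rw [hθdef]; field_simp; ring
    rw [h, Real.rpow_one]
  have hxθ2a : (x ^ θ) ^ (2 * a) = x ^ (θ * (2 * a)) := by
    rw [← Real.rpow_mul hx0.le]
  have hxeps : x ^ θ ≤ x * ε ^ 2 := by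
    have hpos : (0:ℝ) < x ^ (θ * (2 * a)) := Real.rpow_pos_of_pos hx0 _
    have h1 : x ^ θ = x * (x ^ (θ * (2 * a)))⁻¹ := by
      field_simp
      rw [mul_assoc θ 2 a]
      linarith [hxsplit]
    rw [h1]
    apply mul_le_mul_of_nonneg_left _ hx0.le
    rw [← hxθ2a]
    exact hε2
  have hmx : ((n - d : ℕ) : ℝ) ≤ x := by rw [hmcast]; linarith
  have hmpos : (0:ℝ) < ((n - d : ℕ) : ℝ) := by rw [hmcast]; linarith
  have hchern : (D + 1) * Real.log 2 < s ^ 2 / (2 * ((n - d : ℕ) : ℝ)) := by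
    have h1 : s ^ 2 / (2 * x) ≤ s ^ 2 / (2 * ((n - d : ℕ) : ℝ)) := by
      apply div_le_div_of_nonneg_left (sq_nonneg s) (by linarith)
      linarith
    have h2 : 49 / 128 * (x * ε ^ 2) ≤ s ^ 2 / (2 * x) := by
      rw [le_div_iff₀ (by linarith)]
      have hh := mul_le_mul hs78 hs78 (by positivity) hs0
      nlinarith [hh]
    have h3 : 49 / 128 * x ^ θ ≤ 49 / 128 * (x * ε ^ 2) := by nlinarith [hxeps]
    have h4 : (D + 1) * Real.log 2 ≤ D + 1 := by nlinarith [hlog2, hlog2', hD0]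
    have h5 : D + 1 ≤ 3 / 16 * x ^ θ := by linarith
    have h6 : (3:ℝ) / 16 * x ^ θ < 49 / 128 * x ^ θ := by nlinarith [hxθpos]
    linarith
  have hcond : ((2 ^ d : ℕ) : ℝ) *
      (2 * 2 ^ (n - d) * Real.exp (-(s ^ 2) / (2 * ((n - d : ℕ) : ℝ)))) < 2 ^ (n - d) := by
    obtain ⟨q, hqdef⟩ : ∃ q : ℝ, q = s ^ 2 / (2 * ((n - d : ℕ) : ℝ)) := ⟨_, rfl⟩
    have hq0 : 0 < Real.exp q := Real.exp_pos q
    have hlt : (2:ℝ) ^ d * 2 < Real.exp q := by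
      have h2 : Real.exp (((d:ℝ) + 1) * Real.log 2) = 2 ^ (d + 1) := by
        rw [show ((d:ℝ) + 1) = ((d + 1 : ℕ) : ℝ) by push_cast; ring,
          Real.exp_nat_mul, Real.exp_log (by norm_num : (0:ℝ) < 2)]
      have h3 := Real.exp_lt_exp.2 (hqdef ▸ hDdef ▸ hchern)
      rw [h2] at h3
      calc (2:ℝ) ^ d * 2 = 2 ^ (d + 1) := by rw [pow_succ]
        _ < Real.exp q := h3
    have h4 : (2:ℝ) ^ d * 2 * (Real.exp q)⁻¹ < 1 := by
      rw [← div_eq_mul_inv, div_lt_one hq0]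
      exact hlt
    have hrw : -(s ^ 2) / (2 * ((n - d : ℕ) : ℝ)) = -q := by rw [hqdef]; ring
    rw [hrw, Real.exp_neg]
    calc ((2 ^ d : ℕ) : ℝ) * (2 * 2 ^ (n - d) * (Real.exp q)⁻¹)
        = ((2:ℝ) ^ d * 2 * (Real.exp q)⁻¹) * 2 ^ (n - d) := by push_cast; ring
      _ < 1 * 2 ^ (n - d) := mul_lt_mul_of_pos_right h4 (by positivity)
      _ = 2 ^ (n - d) := one_mul _
  obtain ⟨f, hfinj, hfcode⟩ := code_exists (n - d) hm s hs0 hsm d hcond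
  have hbound : (d : ℝ) + s ≤ (n : ℝ) * (d : ℝ) ^ (-a) := by
    rw [← hDdef, ← hxdef, ← hεdef, hsdef]
    linarith
  obtain ⟨F, hsign, hgreat, hpairs, hFcard⟩ := package a n d hdn s f hfcode hbound
  refine ⟨F, d, hsign, hgreat, hpairs, ?_⟩
  rw [hFcard]
  have h1 : Real.log 2 / 16 * (n:ℝ) ^ (1 / (2 * a + 1)) ≤ D * Real.log 2 := by
    rw [← hθdef, ← hxdef]
    nlinarith [hdlo, hlog2]
  calc Real.exp (Real.log 2 / 16 * (n:ℝ) ^ (1 / (2 * a + 1)))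
      ≤ Real.exp (D * Real.log 2) := Real.exp_le_exp.2 h1
    _ = 2 ^ d := by
      rw [hDdef, Real.exp_nat_mul, Real.exp_log (by norm_num : (0:ℝ) < 2)]
    _ = ((2 ^ d : ℕ) : ℝ) := by push_cast; rfl
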